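/- With φ(z)=∫_z^u y ρ(y) dy and g_*(z)=φ(z)/ρ(z), one has ∫_0^z y/g_*(y) dy = ln(φ(0)/φ(z)) for every z in (l,u). Consequently ∫_l^0 y/g_*(y) dy = -∞ and ∫_0^u y/g_*(y) dy = +∞. -/

import Mathlib

open MeasureTheory Set Filter

/-- With `φ z = ∫_z^u y ρ(y) dy` and `g_* = φ/ρ`, one has
`∫_0^z y/g_*(y) dy = log (φ 0 / φ z)` for every `z ∈ (l,u)`; consequently
`∫_l^0 y/g_* dy = -∞` and `∫_0^u y/g_* dy = +∞`, i.e. the displayed interval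
integral `∫_0^z` tends to `+∞` as `z → l⁺` and as `z → u⁻`. -/
theorem stmt2 (ρ φ gstar : ℝ → ℝ) (l u : ℝ) (hl : l < 0) (hu : 0 < u)
    (hρcont : ContinuousOn ρ (Ioo l u))
    (hρpos : ∀ z ∈ Ioo l u, 0 < ρ z)
    (hρzero : ∀ z ∉ Ioo l u, ρ z = 0)
    (hint : IntegrableOn (fun y => y * ρ y) (Ioo l u))
    (hφ : ∀ z, φ z = ∫ y in Ioo z u, y * ρ y)
    (hφpos : ∀ z ∈ Ioo l u, 0 < φ z)
    (hg : ∀ z ∈ Ioo l u, gstar z = φ z / ρ z)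
    (hφl : Tendsto φ (nhdsWithin l (Ioi l)) (nhds 0))
    (hφu : Tendsto φ (nhdsWithin u (Iio u)) (nhds 0)) :
    (∀ z ∈ Ioo l u, (∫ y in (0:ℝ)..z, y / gstar y) = Real.log (φ 0 / φ z)) ∧
    Tendsto (fun z => ∫ y in (0:ℝ)..z, y / gstar y) (nhdsWithin l (Ioi l)) atTop ∧
    Tendsto (fun z => ∫ y in (0:ℝ)..z, y / gstar y) (nhdsWithin u (Iio u)) atTop := by
  have h0 : (0:ℝ) ∈ Ioo l u := ⟨hl, hu⟩
  have hφ' : ∀ z ∈ Ioo l u, φ z = ∫ y in z..u, y * ρ y := by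
    intro z hz
    rw [hφ, intervalIntegral.integral_of_le hz.2.le, integral_Ioc_eq_integral_Ioo]
  have hderiv : ∀ z ∈ Ioo l u, HasDerivAt φ (-(z * ρ z)) z := by
    intro z hz
    have hii : IntervalIntegrable (fun y => y * ρ y) volume z u := by
      rw [intervalIntegrable_iff_integrableOn_Ioc_of_le hz.2.le,
        integrableOn_Ioc_iff_integrableOn_Ioo]
      exact hint.mono_set (Ioo_subset_Ioo hz.1.le le_rfl)
    have hmeas : StronglyMeasurableAtFilter (fun y => y * ρ y) (nhds z) :=
      ⟨Ioo l u, Ioo_mem_nhds hz.1 hz.2, hint.1⟩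
    have hca : ContinuousAt (fun y => y * ρ y) z :=
      ((continuousOn_id.mul hρcont) z hz).continuousAt (Ioo_mem_nhds hz.1 hz.2)
    have H := intervalIntegral.integral_hasDerivAt_left hii hmeas hca
    refine H.congr_of_eventuallyEq ?_
    filter_upwards [Ioo_mem_nhds hz.1 hz.2] with x hx
    exact hφ' x hx
  have hφcont : ContinuousOn φ (Ioo l u) := fun z hz =>
    (hderiv z hz).continuousAt.continuousWithinAt
  have hφne : ∀ z ∈ Ioo l u, φ z ≠ 0 := fun z hz => (hφpos z hz).ne'
  have hFderiv : ∀ z ∈ Ioo l u, HasDerivAt (fun x => -Real.log (φ x)) (z * ρ z / φ z) z := by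
    intro z hz
    have h := ((hderiv z hz).log (hφne z hz)).neg
    rw [show z * ρ z / φ z = -(-(z * ρ z) / φ z) by ring]
    exact h
  have key : ∀ z ∈ Ioo l u, (∫ y in (0:ℝ)..z, y / gstar y) = Real.log (φ 0 / φ z) := by
    intro z hz
    have hsub : uIcc (0:ℝ) z ⊆ Ioo l u := (Set.ordConnected_Ioo).uIcc_subset h0 hz
    have heq : EqOn (fun y => y / gstar y) (fun y => y * ρ y / φ y) (uIcc (0:ℝ) z) := by
      intro y hy
      simp only [hg y (hsub hy), div_div_eq_mul_div]
    have hcont : ContinuousOn (fun y => y * ρ y / φ y) (uIcc (0:ℝ) z) :=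
      (((continuousOn_id.mul hρcont).div hφcont hφne).mono hsub)
    rw [intervalIntegral.integral_congr heq,
      intervalIntegral.integral_eq_sub_of_hasDerivAt
        (fun x hx => hFderiv x (hsub hx)) hcont.intervalIntegrable,
      Real.log_div (hφne 0 h0) (hφne z hz)]
    ring
  refine ⟨key, ?_, ?_⟩
  · have hmem : Ioo l u ∈ nhdsWithin l (Ioi l) :=
      Ioo_mem_nhdsGT_of_mem ⟨le_refl l, hl.trans hu⟩
    have hφt : Tendsto φ (nhdsWithin l (Ioi l)) (nhdsWithin 0 (Ioi 0)) := by
      apply tendsto_nhdsWithin_of_tendsto_nhds_of_eventually_within _ hφl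
      filter_upwards [hmem] with z hz
      exact hφpos z hz
    have h1 : Tendsto (fun z => (φ z)⁻¹) (nhdsWithin l (Ioi l)) atTop :=
      tendsto_inv_nhdsGT_zero.comp hφt
    have h2 : Tendsto (fun z => φ 0 / φ z) (nhdsWithin l (Ioi l)) atTop := by
      simpa [div_eq_mul_inv] using h1.const_mul_atTop (hφpos 0 h0)
    have h3 := Real.tendsto_log_atTop.comp h2
    refine h3.congr' ?_
    filter_upwards [hmem] with z hz
    exact (key z hz).symm
  · have hmem : Ioo l u ∈ nhdsWithin u (Iio u) :=
      Ioo_mem_nhdsLT_of_mem ⟨hl.trans hu, le_refl u⟩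
    have hφt : Tendsto φ (nhdsWithin u (Iio u)) (nhdsWithin 0 (Ioi 0)) := by
      apply tendsto_nhdsWithin_of_tendsto_nhds_of_eventually_within _ hφu
      filter_upwards [hmem] with z hz
      exact hφpos z hz
    have h1 : Tendsto (fun z => (φ z)⁻¹) (nhdsWithin u (Iio u)) atTop :=
      tendsto_inv_nhdsGT_zero.comp hφt
    have h2 : Tendsto (fun z => φ 0 / φ z) (nhdsWithin u (Iio u)) atTop := by
      simpa [div_eq_mul_inv] using h1.const_mul_atTop (hφpos 0 h0)
    have h3 := Real.tendsto_log_atTop.comp h2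
    refine h3.congr' ?_
    filter_upwards [hmem] with z hz
    exact (key z hz).symm
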